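/- arXiv:1606.06421 — 2 statements merged into one kernel-verified Lean document; each statement's English description precedes it below -/
import Mathlib

section
/- Let p ≥ 2, let x¹,…,xᵐ ∈ ℝⁿ and ω₁,…,ω_m > 0. Define v(P) = max over ‖x‖_p ≤ 1 of min_i ω_i‖x - xⁱ‖₂². Let α > 0 and ξ ∈ {-1,1}ⁿ satisfy (xⁱ)ᵀξ < α‖xⁱ‖₂ for every i with ‖xⁱ‖₂ > 0. Then x̃ = n^{-1/p}ξ satisfies min_i ω_i‖x̃ - xⁱ‖₂² ≥ ((1 - α n^{-1/2})/2) · v(P). -/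
open Finset Real

/-- The ℓ_p norm of a vector in ℝⁿ, for real p. -/
noncomputable def pNorm (n : ℕ) (p : ℝ) (x : Fin n → ℝ) : ℝ :=
  (∑ i, |x i| ^ p) ^ (1 / p)

set_option maxHeartbeats 1000000 in
/-- Deterministic core of the approximation bound: if ξ is a sign vector with
    (xⁱ)ᵀξ < α‖xⁱ‖₂ for each i with xⁱ ≠ 0, then x̃ = n^{-1/p}ξ satisfies
    min_i ω_i‖x̃ - xⁱ‖₂² ≥ ((1 - α n^{-1/2})/2)·v(P). -/
theorem maximin_dispersion_approx (n m : ℕ) (hn : 1 ≤ n) (hm : 1 ≤ m)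
    (p : ℝ) (hp : 2 ≤ p) (x : Fin m → Fin n → ℝ) (w : Fin m → ℝ) (hw : ∀ i, 0 < w i)
    (vP : ℝ)
    (hvP : IsGreatest {v : ℝ | ∃ z : Fin n → ℝ, pNorm n p z ≤ 1 ∧
        v = ⨅ i : Fin m, w i * ∑ j, (z j - x i j) ^ 2} vP)
    (α : ℝ) (hα : 0 < α) (ξ : Fin n → ℝ) (hξ : ∀ j, ξ j = 1 ∨ ξ j = -1)
    (hdot : ∀ i, 0 < Real.sqrt (∑ j, (x i j) ^ 2) →
        ∑ j, x i j * ξ j < α * Real.sqrt (∑ j, (x i j) ^ 2)) :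
    (1 - α * (n : ℝ) ^ (-(1 : ℝ) / 2)) / 2 * vP
      ≤ ⨅ i : Fin m, w i * ∑ j, ((n : ℝ) ^ (-(1 / p)) * ξ j - x i j) ^ 2 := by
  have hm' : Nonempty (Fin m) := ⟨⟨0, hm⟩⟩
  have hp0 : 0 < p := by linarith
  have hN : (0:ℝ) < (n:ℝ) := by exact_mod_cast hn
  set t : ℝ := (n : ℝ) ^ (-(1 / p)) with ht_def
  have ht : 0 < t := Real.rpow_pos_of_pos hN _
  set D : ℝ := t ^ 2 * n with hD_def
  have hD : 0 < D := by positivity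
  -- vP is an infimum realized by some feasible z
  obtain ⟨z, hz1, hzeq⟩ := hvP.1
  -- nonnegativity of vP
  have hvP0 : 0 ≤ vP := by
    rw [hzeq]
    refine le_ciInf fun i => ?_
    have := (hw i).le
    positivity
  -- reduce to a pointwise bound
  have hbdd : BddBelow (Set.range fun i : Fin m =>
      w i * ∑ j, (t * ξ j - x i j) ^ 2) := (Set.finite_range _).bddBelow
  set a : ℝ := α * (n : ℝ) ^ (-(1:ℝ) / 2) with ha_def
  -- key identity: n^{-1/2} * sqrt D = t
  have hsqrtD : (n:ℝ) ^ (-(1:ℝ)/2) * Real.sqrt D = t := by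
    have h1 : Real.sqrt D = t * Real.sqrt n := by
      rw [hD_def, Real.sqrt_mul (by positivity), Real.sqrt_sq ht.le]
    rw [h1, Real.sqrt_eq_rpow, ← mul_assoc, mul_comm ((n:ℝ) ^ (-(1:ℝ)/2)) t,
      mul_assoc, ← Real.rpow_add hN]
    norm_num
  -- the ℓ₂ ball bound: ∑ z_j² ≤ D for feasible z
  have hz2 : ∑ j, (z j) ^ 2 ≤ D := by
    have hsum : ∑ j, |z j| ^ p ≤ 1 := by
      by_contra h
      push_neg at h
      have h0 : (0:ℝ) ≤ ∑ j, |z j| ^ p := by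
        apply Finset.sum_nonneg; intro j _
        exact Real.rpow_nonneg (abs_nonneg _) _
      have : (1:ℝ) < (∑ j, |z j| ^ p) ^ (1/p) :=
        Real.one_lt_rpow_iff_of_pos (by linarith) |>.2 (Or.inl ⟨h, by positivity⟩)
      exact absurd hz1 (by simpa [pNorm] using not_le.2 this)
    have hmean := Real.rpow_arith_mean_le_arith_mean_rpow Finset.univ
      (fun _ : Fin n => 1/(n:ℝ)) (fun j => (z j)^2)
      (fun i _ => by positivity) (by rw [Finset.sum_const, Finset.card_univ, Fintype.card_fin, nsmul_eq_mul]; exact mul_one_div_cancel hN.ne') (fun i _ => sq_nonneg _)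
      (show 1 ≤ p/2 by linarith)
    have hzz : ∀ j : Fin n, ((z j)^2) ^ (p/2) = |z j| ^ p := by
      intro j
      rw [← sq_abs, ← Real.rpow_natCast |z j| 2, ← Real.rpow_mul (abs_nonneg _)]
      norm_num
      congr 1
      ring
    have h2 : ∑ i : Fin n, 1/(n:ℝ) * ((z i)^2) ^ (p/2) ≤ 1/(n:ℝ) := by
      rw [← Finset.mul_sum]
      calc 1/(n:ℝ) * ∑ i, ((z i)^2) ^ (p/2)
          = 1/(n:ℝ) * ∑ i, |z i| ^ p := by
            congr 1; exact Finset.sum_congr rfl fun i _ => hzz i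
        _ ≤ 1/(n:ℝ) * 1 := by
            apply mul_le_mul_of_nonneg_left hsum (by positivity)
        _ = 1/(n:ℝ) := mul_one _
    have hA : (0:ℝ) ≤ ∑ i : Fin n, 1/(n:ℝ) * (z i)^2 := by positivity
    have h3 : (∑ i : Fin n, 1/(n:ℝ) * (z i)^2) ^ (p/2) ≤ 1/(n:ℝ) :=
      le_trans hmean h2
    have h4 : ∑ i : Fin n, 1/(n:ℝ) * (z i)^2 ≤ (1/(n:ℝ)) ^ ((2:ℝ)/p) := by
      have := Real.rpow_le_rpow (Real.rpow_nonneg hA _) h3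
        (le_of_lt (by positivity : (0:ℝ) < 2/p))
      rwa [← Real.rpow_mul hA, show p/2 * (2/p) = 1 by field_simp,
        Real.rpow_one] at this
    have hDt : (n:ℝ) * (1/(n:ℝ)) ^ ((2:ℝ)/p) = D := by
      have h1 : (1/(n:ℝ)) ^ ((2:ℝ)/p) = (n:ℝ) ^ (-((2:ℝ)/p)) := by
        rw [one_div, Real.inv_rpow hN.le, ← Real.rpow_neg hN.le]
      have h2 : D = (n:ℝ) ^ (-((2:ℝ)/p)) * (n:ℝ) := by
        have ht2 : t ^ 2 = (n:ℝ) ^ (-((2:ℝ)/p)) := by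
          rw [ht_def, sq, ← Real.rpow_add hN]
          congr 1
          ring
        rw [hD_def, ht2]
      rw [h1, h2]
      exact mul_comm _ _
    calc ∑ j, (z j)^2 = (n:ℝ) * ∑ i : Fin n, 1/(n:ℝ) * (z i)^2 := by
          rw [← Finset.mul_sum, ← mul_assoc, mul_one_div_cancel hN.ne', one_mul]
      _ ≤ (n:ℝ) * (1/(n:ℝ)) ^ ((2:ℝ)/p) := by
          exact mul_le_mul_of_nonneg_left h4 hN.le
      _ = D := hDt
  -- ∑ ξ_j² = n
  have hξ2 : ∑ j, (ξ j) ^ 2 = (n:ℝ) := by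
    have : ∀ j : Fin n, (ξ j) ^ 2 = 1 := by
      intro j; rcases hξ j with h | h <;> rw [h] <;> norm_num
    simp [this]
  refine le_ciInf fun i => ?_
  set S : ℝ := ∑ j, (x i j) ^ 2 with hS_def
  have hS0 : 0 ≤ S := by positivity
  -- expansion of the objective at x̃
  have hexp : ∑ j, (t * ξ j - x i j) ^ 2 = D + S - 2 * t * ∑ j, x i j * ξ j := by
    have : ∀ j : Fin n, (t * ξ j - x i j) ^ 2
        = t^2 * (ξ j)^2 - 2 * t * (x i j * ξ j) + (x i j)^2 := by
      intro j; ring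
    rw [Finset.sum_congr rfl fun j _ => this j]
    rw [Finset.sum_add_distrib, Finset.sum_sub_distrib, ← Finset.mul_sum,
      ← Finset.mul_sum, hξ2]
    rw [hD_def, hS_def]; ring
  -- bound on the dot product term
  have hdotS : 2 * t * ∑ j, x i j * ξ j ≤ a * (D + S) := by
    rcases le_or_gt (Real.sqrt S) 0 with h | h
    · -- S = 0, all x i j = 0
      have hS00 : S = 0 := le_antisymm (Real.sqrt_eq_zero'.mp
        (le_antisymm h (Real.sqrt_nonneg _)) |> fun hh => by
          rcases hh with hh; linarith) hS0
      have hx0 : ∀ j, x i j = 0 := by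
        intro j
        have := Finset.sum_eq_zero_iff_of_nonneg
          (fun j (_ : j ∈ Finset.univ) => sq_nonneg (x i j)) |>.1 hS00 j (Finset.mem_univ j)
        exact pow_eq_zero_iff (n := 2) (by norm_num) |>.1 this
      have : ∑ j, x i j * ξ j = 0 := by
        apply Finset.sum_eq_zero; intro j _; rw [hx0 j, zero_mul]
      rw [this, hS00]
      have : 0 ≤ a * (D + 0) := by
        apply mul_nonneg _ (by linarith)
        rw [ha_def]; positivity
      linarith
    · have hd := hdot i h
      have hAMGM : 2 * Real.sqrt D * Real.sqrt S ≤ D + S := by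
        nlinarith [sq_nonneg (Real.sqrt D - Real.sqrt S),
          Real.sq_sqrt hD.le, Real.sq_sqrt hS0]
      calc 2 * t * ∑ j, x i j * ξ j
          ≤ 2 * t * (α * Real.sqrt S) := by
            apply mul_le_mul_of_nonneg_left hd.le (by positivity)
        _ = α * ((n:ℝ) ^ (-(1:ℝ)/2) * Real.sqrt D) * Real.sqrt S * 2 := by
            rw [hsqrtD]; ring
        _ = α * (n:ℝ) ^ (-(1:ℝ)/2) * (2 * Real.sqrt D * Real.sqrt S) := by ring
        _ ≤ α * (n:ℝ) ^ (-(1:ℝ)/2) * (D + S) := by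
            apply mul_le_mul_of_nonneg_left hAMGM
            positivity
        _ = a * (D + S) := by rw [ha_def]
  -- main chain
  rcases le_or_gt (1 - a) 0 with hc | hc
  · -- trivial case: factor nonpositive
    have h1 : (1 - a) / 2 * vP ≤ 0 := by
      apply mul_nonpos_of_nonpos_of_nonneg _ hvP0
      linarith
    have h2 : 0 ≤ w i * ∑ j, (t * ξ j - x i j) ^ 2 := by
      have := (hw i).le; positivity
    linarith
  · -- vP ≤ w i * (2D + 2S)
    have hvPle : vP ≤ w i * (2 * D + 2 * S) := by
      have h1 : vP ≤ w i * ∑ j, (z j - x i j) ^ 2 := by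
        rw [hzeq]
        exact ciInf_le ((Set.finite_range _).bddBelow) i
      have h2 : ∑ j, (z j - x i j) ^ 2 ≤ 2 * D + 2 * S := by
        have hpt : ∀ j : Fin n, (z j - x i j)^2 ≤ 2 * (z j)^2 + 2 * (x i j)^2 := by
          intro j; nlinarith [sq_nonneg (z j + x i j)]
        calc ∑ j, (z j - x i j) ^ 2
            ≤ ∑ j, (2 * (z j)^2 + 2 * (x i j)^2) :=
              Finset.sum_le_sum fun j _ => hpt j
          _ = 2 * ∑ j, (z j)^2 + 2 * S := by
              rw [Finset.sum_add_distrib, ← Finset.mul_sum, ← Finset.mul_sum, hS_def]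
          _ ≤ 2 * D + 2 * S := by linarith
      exact h1.trans (mul_le_mul_of_nonneg_left h2 (hw i).le)
    have hTi : (1 - a) * (D + S) ≤ ∑ j, (t * ξ j - x i j) ^ 2 := by
      rw [hexp]; nlinarith
    have e1 : (1 - a) / 2 * vP ≤ (1 - a) / 2 * (w i * (2 * D + 2 * S)) :=
      mul_le_mul_of_nonneg_left hvPle (by linarith)
    have e2 : w i * ((1 - a) * (D + S)) ≤ w i * ∑ j, (t * ξ j - x i j) ^ 2 :=
      mul_le_mul_of_nonneg_left hTi (hw i).le
    have e3 : (1 - a) / 2 * (w i * (2 * D + 2 * S)) = w i * ((1 - a) * (D + S)) := by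
      ring
    linarith
end

section
/- Let p ≥ 2, x¹,…,xᵐ ∈ ℝⁿ, ω_i > 0, ρ ∈ (0,1), and α = √(2 ln(m/ρ)). Let ξ ∈ {-1,1}ⁿ be a Rademacher vector and x̃ = n^{-1/p}ξ. With probability at least 1 - ρ, x̃ is feasible (‖x̃‖_p = 1) and min_i ω_i‖x̃ - xⁱ‖₂² ≥ ((1 - √(2 ln(m/ρ)/n))/2) · v(P), where v(P) is the optimal value of max_{‖x‖_p≤1} min_i ω_i‖x - xⁱ‖₂². -/
open Finset Real MeasureTheory ProbabilityTheory ENNReal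

lemma rad_integral {Ω : Type*} [MeasurableSpace Ω] (μ : Measure Ω) [IsProbabilityMeasure μ]
    (X : Ω → ℝ) (hX : Measurable X) (hval : ∀ ω, X ω = 1 ∨ X ω = -1)
    (hhalf : μ {ω | X ω = 1} = 1 / 2) (f : ℝ → ℝ) :
    Integrable (fun ω => f (X ω)) μ ∧ ∫ ω, f (X ω) ∂μ = (f 1 + f (-1)) / 2 := by
  set A : Set Ω := {ω | X ω = 1} with hA_def
  have hA : MeasurableSet A := hX (measurableSet_singleton 1)
  have hfun : (fun ω => f (X ω)) =
      (A.indicator (fun _ => f 1) + Aᶜ.indicator (fun _ => f (-1))) := by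
    funext ω
    rcases hval ω with h | h
    · have hmem : ω ∈ A := h
      simp [Set.indicator_of_mem hmem, h,
        Set.indicator_of_notMem (by simpa using hmem : ω ∉ Aᶜ)]
    · have hmem : ω ∉ A := by
        simp only [hA_def, Set.mem_setOf_eq, h]; norm_num
      simp [Set.indicator_of_notMem hmem, h, Set.indicator_of_mem (by simpa using hmem : ω ∈ Aᶜ)]
  have hint1 : Integrable (A.indicator (fun _ => f 1)) μ :=
    (integrable_const (f 1)).indicator hA
  have hint2 : Integrable (Aᶜ.indicator (fun _ => f (-1))) μ :=
    (integrable_const (f (-1))).indicator hA.compl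
  have hAc : μ Aᶜ = 1 / 2 := by
    rw [measure_compl hA (measure_ne_top _ _), measure_univ, hhalf]
    have : (1:ℝ≥0∞) - 1/2 = 1/2 := by
      have := ENNReal.sub_half (a := 1) one_ne_top
      simpa using this
    exact this
  constructor
  · rw [hfun]; exact hint1.add hint2
  · rw [hfun, integral_add' hint1 hint2, integral_indicator_const _ hA,
      integral_indicator_const _ hA.compl, measureReal_def, measureReal_def, hhalf, hAc]
    simp [ENNReal.toReal_div]
    ring

lemma rad_tail {Ω : Type*} [MeasurableSpace Ω] (μ : Measure Ω) [IsProbabilityMeasure μ]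
    {n : ℕ} (ξ : Fin n → Ω → ℝ) (hmeas : ∀ j, Measurable (ξ j))
    (hindep : iIndepFun ξ μ)
    (hval : ∀ j ω, ξ j ω = 1 ∨ ξ j ω = -1)
    (hhalf : ∀ j, μ {ω | ξ j ω = 1} = 1 / 2)
    (a : Fin n → ℝ) (t : ℝ) (ht : 0 < t) (hD : 0 < ∑ j, (a j) ^ 2) :
    (μ {ω | t ≤ ∑ j, a j * ξ j ω}).toReal ≤ Real.exp (-t ^ 2 / (2 * ∑ j, (a j) ^ 2)) := by
  set D := ∑ j, (a j) ^ 2 with hD_def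
  set s := t / D with hs_def
  have hs0 : 0 ≤ s := le_of_lt (div_pos ht hD)
  set X : Fin n → Ω → ℝ := fun j ω => a j * ξ j ω with hX_def
  have hXmeas : ∀ j, Measurable (X j) := fun j => (hmeas j).const_mul (a j)
  have hXindep : iIndepFun X μ :=
    hindep.comp (fun j y => a j * y) (fun j => measurable_const_mul (a j))
  have hXint : ∀ j, Integrable (fun ω => Real.exp (s * X j ω)) μ := fun j =>
    (rad_integral μ (ξ j) (hmeas j) (hval j) (hhalf j) (fun y => Real.exp (s * (a j * y)))).1
  have hmgf : ∀ j, mgf (X j) μ s = Real.cosh (s * a j) := by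
    intro j
    have h2 := (rad_integral μ (ξ j) (hmeas j) (hval j) (hhalf j)
      (fun y => Real.exp (s * (a j * y)))).2
    rw [mgf]
    rw [show (fun ω => Real.exp (s * X j ω)) = (fun ω => Real.exp (s * (a j * ξ j ω))) from rfl]
    rw [h2, Real.cosh_eq]
    ring_nf
  have hSint : Integrable (fun ω => Real.exp (s * (∑ j : Fin n, X j) ω)) μ :=
    hXindep.integrable_exp_mul_sum hXmeas (fun j _ => hXint j)
  have chern := measure_ge_le_exp_mul_mgf (μ := μ) (X := ∑ j : Fin n, X j) t hs0 hSint
  have hsetEq : {ω | t ≤ (∑ j : Fin n, X j) ω} = {ω | t ≤ ∑ j, a j * ξ j ω} := by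
    ext ω; simp [hX_def]
  rw [hsetEq] at chern
  refine chern.trans ?_
  have hmgfsum : mgf (∑ j : Fin n, X j) μ s = ∏ j, Real.cosh (s * a j) := by
    rw [hXindep.mgf_sum hXmeas Finset.univ]
    exact Finset.prod_congr rfl (fun j _ => hmgf j)
  rw [hmgfsum]
  have hprod : (∏ j, Real.cosh (s * a j)) ≤ Real.exp (s ^ 2 * D / 2) := by
    calc (∏ j, Real.cosh (s * a j)) ≤ ∏ j, Real.exp ((s * a j) ^ 2 / 2) := by
          apply Finset.prod_le_prod (fun j _ => (Real.cosh_pos _).le)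
          exact fun j _ => Real.cosh_le_exp_half_sq _
      _ = Real.exp (∑ j, (s * a j) ^ 2 / 2) := by rw [← Real.exp_sum]
      _ = Real.exp (s ^ 2 * D / 2) := by
          congr 1
          rw [hD_def, Finset.mul_sum, ← Finset.sum_div]
          congr 1
          exact Finset.sum_congr rfl (fun j _ => by ring)
  calc Real.exp (-s * t) * ∏ j, Real.cosh (s * a j)
      ≤ Real.exp (-s * t) * Real.exp (s ^ 2 * D / 2) := by
        exact mul_le_mul_of_nonneg_left hprod (Real.exp_nonneg _)
    _ = Real.exp (-s * t + s ^ 2 * D / 2) := by rw [← Real.exp_add]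
    _ = Real.exp (-t ^ 2 / (2 * D)) := by
        congr 1
        rw [hs_def]
        field_simp
        ring

lemma sum_sq_le {n : ℕ} {p : ℝ} (hp : 2 ≤ p) (z : Fin n → ℝ)
    (hz : ∑ j, |z j| ^ p ≤ 1) : ∑ j, (z j) ^ 2 ≤ (n : ℝ) ^ (1 - 2 / p) := by
  have hp0 : 0 < p := lt_of_lt_of_le (by norm_num) hp
  have habs : ∀ j : Fin n, (z j) ^ 2 = |z j| ^ (2 : ℝ) := by
    intro j
    rw [show ((2:ℝ)) = ((2:ℕ):ℝ) by norm_num, Real.rpow_natCast, sq_abs]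
  rcases eq_or_lt_of_le hp with hp2 | hp2
  · have : (1 : ℝ) - 2 / p = 0 := by rw [← hp2]; norm_num
    rw [this, Real.rpow_zero]
    calc ∑ j, (z j) ^ 2 = ∑ j, |z j| ^ p := by
          refine Finset.sum_congr rfl (fun j _ => ?_)
          rw [habs j, ← hp2]
      _ ≤ 1 := hz
  · -- p > 2 : Hölder with exponents p/2 and its conjugate
    have hP1 : (1 : ℝ) < p / 2 := by linarith
    have hconj := Real.HolderConjugate.conjExponent hP1
    set Q := Real.conjExponent (p / 2) with hQ_def
    have key := Real.inner_le_Lp_mul_Lq_of_nonneg (s := Finset.univ)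
      (f := fun j => |z j| ^ (2 : ℝ)) (g := fun _ => (1 : ℝ)) hconj
      (fun j _ => Real.rpow_nonneg (abs_nonneg _) _) (fun j _ => zero_le_one)
    simp only [mul_one, Real.one_rpow] at key
    have hfP : ∀ j : Fin n, (|z j| ^ (2 : ℝ)) ^ (p / 2) = |z j| ^ p := by
      intro j
      rw [← Real.rpow_mul (abs_nonneg _)]
      congr 1
      ring
    have h1 : (∑ j, (|z j| ^ (2 : ℝ)) ^ (p / 2)) ^ (1 / (p / 2)) ≤ 1 := by
      apply Real.rpow_le_one _ _ (by positivity)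
      · positivity
      · calc (∑ j, (|z j| ^ (2 : ℝ)) ^ (p / 2)) = ∑ j, |z j| ^ p :=
            Finset.sum_congr rfl (fun j _ => hfP j)
          _ ≤ 1 := hz
    have h2 : (∑ _j : Fin n, (1 : ℝ)) ^ (1 / Q) = (n : ℝ) ^ (1 - 2 / p) := by
      rw [Finset.sum_const, Finset.card_univ, Fintype.card_fin, nsmul_eq_mul, mul_one]
      congr 1
      have := hconj.inv_add_inv_eq_one
      have hQ0 : Q ≠ 0 := hconj.symm.ne_zero
      field_simp
      field_simp at this
      linarith [this]
    calc ∑ j, (z j) ^ 2 = ∑ j, |z j| ^ (2 : ℝ) := Finset.sum_congr rfl (fun j _ => habs j)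
      _ ≤ (∑ j, (|z j| ^ (2 : ℝ)) ^ (p / 2)) ^ (1 / (p / 2)) * (∑ _j : Fin n, (1 : ℝ)) ^ (1 / Q) :=
          key
      _ ≤ 1 * (n : ℝ) ^ (1 - 2 / p) := by
          rw [h2]
          exact mul_le_mul_of_nonneg_right h1 (Real.rpow_nonneg (Nat.cast_nonneg _) _)
      _ = (n : ℝ) ^ (1 - 2 / p) := one_mul _
/-- With probability at least 1 - ρ, the random point x̃ = n^{-1/p}ξ (ξ Rademacher)
    is feasible and achieves min_i ω_i‖x̃ - xⁱ‖₂² ≥ ((1 - √(2 ln(m/ρ)/n))/2)·v(P). -/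
theorem maximin_dispersion_randomized {Ω : Type*} [MeasurableSpace Ω]
    (μ : Measure Ω) [IsProbabilityMeasure μ] (n m : ℕ) (hn : 1 ≤ n) (hm : 1 ≤ m)
    (p : ℝ) (hp : 2 ≤ p) (x : Fin m → Fin n → ℝ) (w : Fin m → ℝ) (hw : ∀ i, 0 < w i)
    (ρ : ℝ) (hρ0 : 0 < ρ) (hρ1 : ρ < 1)
    (ξ : Fin n → Ω → ℝ) (hmeas : ∀ j, Measurable (ξ j))
    (hindep : iIndepFun ξ μ)
    (hval : ∀ j ω, ξ j ω = 1 ∨ ξ j ω = -1)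
    (hhalf : ∀ j, μ {ω | ξ j ω = 1} = 1 / 2)
    (vP : ℝ)
    (hvP : IsLUB {v : ℝ | ∃ z : Fin n → ℝ, pNorm n p z ≤ 1 ∧
        v = ⨅ i : Fin m, w i * ∑ j, (z j - x i j) ^ 2} vP) :
    (1 : ℝ≥0∞) - ENNReal.ofReal ρ
      ≤ μ {ω | pNorm n p (fun j => (n : ℝ) ^ (-(1 / p)) * ξ j ω) = 1 ∧
          (1 - Real.sqrt (2 * Real.log (m / ρ) / n)) / 2 * vP
            ≤ ⨅ i : Fin m, w i * ∑ j, ((n : ℝ) ^ (-(1 / p)) * ξ j ω - x i j) ^ 2} := by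
  have hn0 : (0 : ℝ) < n := by exact_mod_cast hn
  have hm0 : (0 : ℝ) < m := by exact_mod_cast hm
  have hp0 : (0 : ℝ) < p := by linarith
  have hFinm : Nonempty (Fin m) := ⟨⟨0, hm⟩⟩
  set c : ℝ := (n : ℝ) ^ (-(1 / p)) with hc_def
  set L : ℝ := Real.log (m / ρ) with hL_def
  set β : ℝ := Real.sqrt (2 * L / n) with hβ_def
  have hc : 0 < c := Real.rpow_pos_of_pos hn0 _
  have hcp : c ^ p = (n : ℝ)⁻¹ := by
    rw [hc_def, ← Real.rpow_mul hn0.le]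
    rw [show -(1 / p) * p = -1 by field_simp]
    rw [Real.rpow_neg_one]
  have hL : 0 < L := by
    rw [hL_def]
    apply Real.log_pos
    rw [lt_div_iff₀ hρ0, one_mul]
    calc ρ < 1 := hρ1
      _ ≤ (m : ℝ) := by exact_mod_cast hm
  have hβ0 : 0 < β := by
    rw [hβ_def]
    apply Real.sqrt_pos.mpr
    positivity
  have hβsq : β ^ 2 * n = 2 * L := by
    rw [hβ_def, Real.sq_sqrt (by positivity)]
    field_simp
  have hsq1 : ∀ j ω, (ξ j ω) ^ 2 = 1 := by
    intro j ω; rcases hval j ω with h | h <;> rw [h] <;> norm_num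
  -- feasibility holds surely
  have hfeas : ∀ ω, pNorm n p (fun j => c * ξ j ω) = 1 := by
    intro ω
    have hterm : ∀ j : Fin n, |c * ξ j ω| ^ p = (n : ℝ)⁻¹ := by
      intro j
      rcases hval j ω with h | h <;>
        rw [h] <;> simp only [mul_one, mul_neg_one, abs_neg, abs_of_pos hc] <;> exact hcp
    rw [pNorm, Finset.sum_congr rfl (fun j _ => hterm j), Finset.sum_const, Finset.card_univ,
      Fintype.card_fin, nsmul_eq_mul, mul_inv_cancel₀ (ne_of_gt hn0), Real.one_rpow]
  -- vP is nonnegative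
  have hvP0 : 0 ≤ vP := by
    have hmem : (⨅ i : Fin m, w i * ∑ j, ((0 : Fin n → ℝ) j - x i j) ^ 2) ∈
        {v : ℝ | ∃ z : Fin n → ℝ, pNorm n p z ≤ 1 ∧
          v = ⨅ i : Fin m, w i * ∑ j, (z j - x i j) ^ 2} := by
      refine ⟨0, ?_, rfl⟩
      rw [pNorm]
      simp only [Pi.zero_apply, abs_zero]
      rw [Real.zero_rpow (ne_of_gt hp0)]
      simp only [Finset.sum_const, smul_zero]
      rw [Real.zero_rpow (by positivity)]
      norm_num
    have h0 : (0 : ℝ) ≤ ⨅ i : Fin m, w i * ∑ j, ((0 : Fin n → ℝ) j - x i j) ^ 2 :=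
      le_ciInf fun i => mul_nonneg (hw i).le (Finset.sum_nonneg fun j _ => sq_nonneg _)
    exact h0.trans (hvP.1 hmem)
  -- exponent bookkeeping : n^(1 - 2/p) = c^2 * n
  have hN2 : (n : ℝ) ^ ((1 : ℝ) - 2 / p) = c ^ 2 * n := by
    have h1 : c ^ (2 : ℕ) = (n : ℝ) ^ (-(1 / p) * ((2 : ℕ) : ℝ)) := by
      rw [hc_def, Real.rpow_mul hn0.le, Real.rpow_natCast]
    have h2 : (n : ℝ) ^ (-(1 / p) * ((2 : ℕ) : ℝ)) * (n : ℝ) ^ (1 : ℝ) =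
        (n : ℝ) ^ (-(1 / p) * ((2 : ℕ) : ℝ) + 1) := (Real.rpow_add hn0 _ _).symm
    rw [Real.rpow_one] at h2
    rw [h1, h2]
    congr 1
    push_cast
    ring
  -- upper bound on vP
  have hub : ∀ i, vP ≤ 2 * (w i * (c ^ 2 * n) + w i * ∑ j, (x i j) ^ 2) := by
    intro i
    apply hvP.2
    rintro v ⟨z, hz1, rfl⟩
    have h0 : 0 ≤ ∑ j, |z j| ^ p :=
      Finset.sum_nonneg fun j _ => Real.rpow_nonneg (abs_nonneg _) _
    have hzsum : ∑ j, |z j| ^ p ≤ 1 := by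
      have hle := Real.rpow_le_rpow (Real.rpow_nonneg h0 _) hz1 hp0.le
      rwa [← Real.rpow_mul h0, one_div, inv_mul_cancel₀ (ne_of_gt hp0), Real.rpow_one,
        Real.one_rpow] at hle
    have hz2 : ∑ j, (z j) ^ 2 ≤ c ^ 2 * n := by
      calc ∑ j, (z j) ^ 2 ≤ (n : ℝ) ^ ((1 : ℝ) - 2 / p) := sum_sq_le hp z hzsum
        _ = c ^ 2 * n := hN2
    calc (⨅ i' : Fin m, w i' * ∑ j, (z j - x i' j) ^ 2)
        ≤ w i * ∑ j, (z j - x i j) ^ 2 := ciInf_le (Finite.bddBelow_range _) i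
      _ ≤ w i * ∑ j, (2 * (z j) ^ 2 + 2 * (x i j) ^ 2) := by
          apply mul_le_mul_of_nonneg_left _ (hw i).le
          exact Finset.sum_le_sum fun j _ => by nlinarith [sq_nonneg (z j + x i j)]
      _ = w i * (2 * ∑ j, (z j) ^ 2 + 2 * ∑ j, (x i j) ^ 2) := by
          rw [Finset.sum_add_distrib, ← Finset.mul_sum, ← Finset.mul_sum]
      _ ≤ w i * (2 * (c ^ 2 * n) + 2 * ∑ j, (x i j) ^ 2) := by
          apply mul_le_mul_of_nonneg_left _ (hw i).le
          linarith
      _ = 2 * (w i * (c ^ 2 * n) + w i * ∑ j, (x i j) ^ 2) := by ring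
  -- decomposition of the objective
  have hZdecomp : ∀ i ω, w i * ∑ j, (c * ξ j ω - x i j) ^ 2 =
      w i * (c ^ 2 * n) + w i * ∑ j, (x i j) ^ 2 - 2 * c * (w i * ∑ j, x i j * ξ j ω) := by
    intro i ω
    have hterm : ∀ j : Fin n, (c * ξ j ω - x i j) ^ 2 =
        c ^ 2 - 2 * c * (x i j * ξ j ω) + (x i j) ^ 2 := by
      intro j
      calc (c * ξ j ω - x i j) ^ 2
          = c ^ 2 * (ξ j ω) ^ 2 - 2 * c * (x i j * ξ j ω) + (x i j) ^ 2 := by ring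
        _ = c ^ 2 - 2 * c * (x i j * ξ j ω) + (x i j) ^ 2 := by rw [hsq1 j ω, mul_one]
    rw [Finset.sum_congr rfl (fun j _ => hterm j)]
    rw [Finset.sum_add_distrib, Finset.sum_sub_distrib, ← Finset.mul_sum, Finset.sum_const,
      Finset.card_univ, Fintype.card_fin, nsmul_eq_mul]
    ring
  -- the good event
  set G : Set Ω := {ω | pNorm n p (fun j => c * ξ j ω) = 1 ∧
      (1 - β) / 2 * vP ≤ ⨅ i : Fin m, w i * ∑ j, (c * ξ j ω - x i j) ^ 2} with hG_def
  show (1 : ℝ≥0∞) - ENNReal.ofReal ρ ≤ μ G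
  have hZnn : ∀ i ω, 0 ≤ w i * ∑ j, (c * ξ j ω - x i j) ^ 2 := fun i ω =>
    mul_nonneg (hw i).le (Finset.sum_nonneg fun j _ => sq_nonneg _)
  rcases le_or_gt 1 β with hβ1 | hβ1
  · -- trivial case : the bound is nonpositive
    have hGuniv : G = Set.univ := by
      apply Set.eq_univ_iff_forall.mpr
      intro ω
      refine ⟨hfeas ω, ?_⟩
      have h1 : (1 - β) / 2 * vP ≤ 0 :=
        mul_nonpos_of_nonpos_of_nonneg (by linarith) hvP0
      exact h1.trans (le_ciInf fun i => hZnn i ω)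
    rw [hGuniv, measure_univ]
    exact tsub_le_self
  · -- main case
    set t : Fin m → ℝ := fun i =>
      β * (w i * (c ^ 2 * n) + w i * ∑ j, (x i j) ^ 2) / (2 * c * w i) with ht_def
    set F : Fin m → Set Ω := fun i => {ω | t i ≤ ∑ j, x i j * ξ j ω} with hF_def
    have hsubset : Gᶜ ⊆ ⋃ i, F i := by
      intro ω hω
      simp only [hG_def, Set.mem_compl_iff, Set.mem_setOf_eq, not_and_or] at hω
      rcases hω with h | h
      · exact absurd (hfeas ω) h
      push_neg at h
      obtain ⟨i, hi⟩ := exists_lt_of_ciInf_lt h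
      refine Set.mem_iUnion.mpr ⟨i, ?_⟩
      simp only [hF_def, ht_def, Set.mem_setOf_eq]
      rw [hZdecomp i ω] at hi
      obtain ⟨A, hA⟩ : ∃ A, A = w i * (c ^ 2 * (n : ℝ)) := ⟨_, rfl⟩
      obtain ⟨B, hB⟩ : ∃ B, B = w i * ∑ j, (x i j) ^ 2 := ⟨_, rfl⟩
      rw [← hA, ← hB] at hi ⊢
      have hA0 : 0 < A := by
        rw [hA]; exact mul_pos (hw i) (by positivity)
      have hB0 : 0 ≤ B := by
        rw [hB]; exact mul_nonneg (hw i).le (Finset.sum_nonneg fun j _ => sq_nonneg _)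
      have hubi : vP ≤ 2 * (A + B) := by rw [hA, hB]; exact hub i
      have hθ0 : 0 ≤ (1 - β) / 2 := by linarith
      have h1 : (1 - β) / 2 * vP ≤ (1 - β) / 2 * (2 * (A + B)) :=
        mul_le_mul_of_nonneg_left hubi hθ0
      have h2 : (1 - β) / 2 * (2 * (A + B)) = (A + B) - β * (A + B) := by ring
      have hkey : β * (A + B) < 2 * c * (w i * ∑ j, x i j * ξ j ω) := by linarith
      rw [div_le_iff₀ (mul_pos (mul_pos two_pos hc) (hw i))]
      calc β * (A + B) ≤ 2 * c * (w i * ∑ j, x i j * ξ j ω) := hkey.le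
        _ = (∑ j, x i j * ξ j ω) * (2 * c * w i) := by ring
    have hFbound : ∀ i, μ (F i) ≤ ENNReal.ofReal (ρ / m) := by
      intro i
      obtain ⟨A, hA⟩ : ∃ A, A = w i * (c ^ 2 * (n : ℝ)) := ⟨_, rfl⟩
      obtain ⟨B, hB⟩ : ∃ B, B = w i * ∑ j, (x i j) ^ 2 := ⟨_, rfl⟩
      have hA0 : 0 < A := by
        rw [hA]; exact mul_pos (hw i) (by positivity)
      have hB0 : 0 ≤ B := by
        rw [hB]; exact mul_nonneg (hw i).le (Finset.sum_nonneg fun j _ => sq_nonneg _)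
      have hti : t i = β * (A + B) / (2 * c * w i) := by
        simp only [ht_def]; rw [hA, hB]
      have ht0 : 0 < t i := by
        rw [hti]
        exact div_pos (mul_pos hβ0 (by linarith)) (mul_pos (mul_pos two_pos hc) (hw i))
      have hFi : F i = {ω | t i ≤ ∑ j, x i j * ξ j ω} := by simp only [hF_def]
      rcases eq_or_lt_of_le (Finset.sum_nonneg
          (fun j (_ : j ∈ Finset.univ) => sq_nonneg (x i j))) with hD0 | hD0
      · -- all x i j = 0 : the event is empty
        have hxz : ∀ j : Fin n, x i j = 0 := by
          intro j
          have h := (Finset.sum_eq_zero_iff_of_nonneg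
            (fun j (_ : j ∈ Finset.univ) => sq_nonneg (x i j))).mp hD0.symm j (Finset.mem_univ j)
          exact pow_eq_zero_iff (n := 2) (by norm_num) |>.mp h
        have hFempty : F i = ∅ := by
          rw [hFi]
          apply Set.eq_empty_iff_forall_notMem.mpr
          intro ω hω
          simp only [Set.mem_setOf_eq] at hω
          rw [Finset.sum_congr rfl (fun j _ => by rw [hxz j, zero_mul]),
            Finset.sum_const_zero] at hω
          linarith
        rw [hFempty]
        simp
      · -- nondegenerate case : tail bound
        have htail := rad_tail μ ξ hmeas hindep hval hhalf (x i) (t i) ht0 hD0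
        have hexp : Real.exp (-(t i) ^ 2 / (2 * ∑ j, (x i j) ^ 2)) ≤ ρ / m := by
          have hLle : L ≤ (t i) ^ 2 / (2 * ∑ j, (x i j) ^ 2) := by
            rw [le_div_iff₀ (mul_pos two_pos hD0), hti, div_pow,
              le_div_iff₀ (pow_pos (mul_pos (mul_pos two_pos hc) (hw i)) 2)]
            have hLval : L = β ^ 2 * n / 2 := by linarith
            have hid : L * (2 * ∑ j, (x i j) ^ 2) * (2 * c * w i) ^ 2 =
                β ^ 2 * (4 * A * B) := by
              rw [hLval, hA, hB]; ring
            rw [hid]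
            nlinarith [sq_nonneg (β * (A - B))]
          calc Real.exp (-(t i) ^ 2 / (2 * ∑ j, (x i j) ^ 2)) ≤ Real.exp (-L) := by
                apply Real.exp_le_exp.mpr
                rw [neg_div]
                linarith
            _ = ρ / m := by
                rw [hL_def, ← Real.log_inv,
                  Real.exp_log (inv_pos.mpr (div_pos hm0 hρ0)), inv_div]
        have hFle : (μ (F i)).toReal ≤ ρ / m := by
          rw [hFi]
          exact htail.trans hexp
        rw [← ENNReal.ofReal_toReal (measure_ne_top μ (F i))]
        exact ENNReal.ofReal_le_ofReal hFle
    have hcompl : μ Gᶜ ≤ ENNReal.ofReal ρ := by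
      calc μ Gᶜ ≤ μ (⋃ i, F i) := measure_mono hsubset
        _ ≤ ∑' i, μ (F i) := measure_iUnion_le _
        _ = ∑ i, μ (F i) := tsum_fintype _
        _ ≤ ∑ _i : Fin m, ENNReal.ofReal (ρ / m) := Finset.sum_le_sum fun i _ => hFbound i
        _ = (m : ℝ≥0∞) * ENNReal.ofReal (ρ / m) := by
            rw [Finset.sum_const, Finset.card_univ, Fintype.card_fin, nsmul_eq_mul]
        _ = ENNReal.ofReal ρ := by
            rw [← ENNReal.ofReal_natCast m, ← ENNReal.ofReal_mul (Nat.cast_nonneg m)]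
            congr 1
            field_simp
    have h1 : (1 : ℝ≥0∞) ≤ μ G + μ Gᶜ := by
      calc (1 : ℝ≥0∞) = μ Set.univ := measure_univ.symm
        _ = μ (G ∪ Gᶜ) := by rw [Set.union_compl_self]
        _ ≤ μ G + μ Gᶜ := measure_union_le _ _
    rw [tsub_le_iff_right]
    calc (1 : ℝ≥0∞) ≤ μ G + μ Gᶜ := h1
      _ ≤ μ G + ENNReal.ofReal ρ := add_le_add_right hcompl _
end
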